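/- arXiv:0904.2503 — 10 statements merged into one kernel-verified Lean document; each statement's English description precedes it below -/
import Mathlib

section
/- If G is a finite p-nilpotent group and P a Sylow p-subgroup of G, then P controls p-fusion in G: for any subgroup A ≤ P and g ∈ G with A^g ≤ P, there exists x ∈ P such that a^g = a^x for all a ∈ A. -/
open scoped Pointwise


theorem stmt_2 {G : Type*} [Group G] [Finite G] (p : ℕ) (hp : p.Prime) (P : Sylow p G)
    (hnil : ∃ N : Subgroup G, N.Normal ∧ Nat.Coprime (Nat.card N) p ∧
      N ⊔ (P : Subgroup G) = ⊤) :
    ∀ A : Subgroup G, A ≤ (P : Subgroup G) → ∀ g : G,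
      (∀ a ∈ A, g⁻¹ * a * g ∈ (P : Subgroup G)) →
      ∃ x ∈ (P : Subgroup G), ∀ a ∈ A, g⁻¹ * a * g = x⁻¹ * a * x := by
  obtain ⟨N, hN, hcop, hNP⟩ := hnil
  -- trivial intersection
  have htriv : ∀ y, y ∈ N → y ∈ (P : Subgroup G) → y = 1 := by
    intro y hyN hyP
    obtain ⟨k, hk⟩ := P.2 ⟨y, hyP⟩
    have hk' : y ^ (p ^ k) = 1 := by
      have := congrArg (Subgroup.subtype (P : Subgroup G)) hk
      simpa using this
    have hd1 : orderOf y ∣ p ^ k := orderOf_dvd_of_pow_eq_one hk'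
    have hd2 : orderOf y ∣ Nat.card N := by
      have := orderOf_dvd_natCard (⟨y, hyN⟩ : N)
      simpa [orderOf_submonoid] using this
    have : orderOf y ∣ 1 := by
      have hc : Nat.Coprime (Nat.card N) (p ^ k) := hcop.pow_right k
      calc orderOf y ∣ Nat.gcd (Nat.card N) (p ^ k) := Nat.dvd_gcd hd2 hd1
        _ = 1 := hc
    have := Nat.eq_one_of_dvd_one this
    exact orderOf_eq_one_iff.mp this
  intro A hA g hgA
  have hg : g ∈ ((N : Set G) * ((P : Subgroup G) : Set G)) := by
    rw [← Subgroup.normal_mul, hNP]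
    trivial
  obtain ⟨n, hn, x, hx, rfl⟩ := hg
  refine ⟨x, hx, fun a ha => ?_⟩
  have haP : a ∈ (P : Subgroup G) := hA ha
  have hconj : n⁻¹ * a * n ∈ (P : Subgroup G) := by
    have h1 := hgA a ha
    have : x * ((n * x)⁻¹ * a * (n * x)) * x⁻¹ ∈ (P : Subgroup G) :=
      Subgroup.mul_mem _ (Subgroup.mul_mem _ hx h1) (Subgroup.inv_mem _ hx)
    simpa [mul_assoc] using this
  have hcomm : a⁻¹ * (n⁻¹ * a * n) = 1 := by
    apply htriv
    · have h1 : a⁻¹ * n⁻¹ * a ∈ N := by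
        simpa [mul_assoc] using hN.conj_mem n⁻¹ (N.inv_mem hn) a⁻¹
      have := N.mul_mem h1 hn
      simpa [mul_assoc] using this
    · exact Subgroup.mul_mem _ (Subgroup.inv_mem _ haP) hconj
  have hn_a : n⁻¹ * a * n = a := by
    have := congrArg (a * ·) hcomm
    simp only [mul_one] at this
    rw [← mul_assoc, ← mul_assoc] at this
    simpa using this
  calc (n * x)⁻¹ * a * (n * x) = x⁻¹ * (n⁻¹ * a * n) * x := by group
    _ = x⁻¹ * a * x := by rw [hn_a]
end

section
/- Let G be a finite group, p a prime, and K = ⟨x ∈ G : x^q = 1⟩ with q = p (p odd) or q = 4 (p = 2). If K ≤ Z_n(G) for some n, then K is a finite p-group. -/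
lemma mem_upperCentralSeries_of_le {G : Type*} [Group G] (H : Subgroup G) (n : ℕ) :
    ∀ x : H, (x : G) ∈ upperCentralSeries G n → x ∈ upperCentralSeries H n := by
  induction n with
  | zero =>
    intro x hx
    unfold upperCentralSeries at hx ⊢
    rw [upperCentralSeries_zero, Subgroup.mem_bot] at hx ⊢
    exact Subtype.ext hx
  | succ n ih =>
    intro x hx
    unfold upperCentralSeries at hx ⊢
    rw [mem_upperCentralSeries_succ_iff] at hx ⊢
    intro y
    exact ih _ (hx (y : G))

theorem stmt_8 {G : Type*} [Group G] [Finite G] (p : ℕ) (hp : p.Prime) (n : ℕ)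
    (hK : Subgroup.closure {x : G | x ^ (if p = 2 then 4 else p) = 1} ≤ upperCentralSeries G n) :
    IsPGroup p (Subgroup.closure {x : G | x ^ (if p = 2 then 4 else p) = 1}) := by
  haveI : Fact p.Prime := ⟨hp⟩
  set S : Set G := {x : G | x ^ (if p = 2 then 4 else p) = 1} with hS
  set K : Subgroup G := Subgroup.closure S with hKdef
  -- every element of S is a p-element
  have hq : ∃ k : ℕ, (if p = 2 then 4 else p) = p ^ k := by
    by_cases h2 : p = 2
    · exact ⟨2, by simp [h2]⟩
    · exact ⟨1, by simp [h2]⟩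
  obtain ⟨k, hk⟩ := hq
  -- K is nilpotent
  haveI : Group.IsNilpotent K := by
    refine ⟨n, ?_⟩
    rw [eq_top_iff]
    intro x _
    exact mem_upperCentralSeries_of_le K n x (hK x.2)
  -- the unique Sylow p-subgroup of K
  obtain ⟨P⟩ : Nonempty (Sylow p K) := inferInstance
  have hPnormal : (P : Subgroup K).Normal := by
    have h := (isNilpotent_of_finite_tfae (G := ↥K)).out 0 3
    exact h.mp inferInstance p (Fact.mk hp) P
  haveI := Sylow.unique_of_normal P hPnormal
  -- each generator lies in P
  have hgen : ((↑) : K → G) ⁻¹' S ⊆ (P : Subgroup K) := by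
    intro x hx
    have hx1 : (x : G) ^ p ^ k = 1 := by rw [← hk]; exact hx
    have hxK : x ^ p ^ k = 1 := Subtype.ext (by push_cast [hx1]; rfl)
    have hpg : IsPGroup p (Subgroup.zpowers x) := by
      rintro ⟨y, m, rfl⟩
      refine ⟨k, Subtype.ext ?_⟩
      push_cast
      rw [← zpow_natCast, ← zpow_mul, mul_comm, zpow_mul, zpow_natCast, hxK, one_zpow]
    obtain ⟨Q, hQ⟩ := hpg.exists_le_sylow
    have : Q = P := Subsingleton.elim _ _
    exact this ▸ hQ (Subgroup.mem_zpowers x)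
  -- hence K = P
  have htop : (⊤ : Subgroup K) ≤ (P : Subgroup K) := by
    rw [← Subgroup.closure_closure_coe_preimage (k := S)]
    exact Subgroup.closure_le _ |>.mpr hgen
  have hPtop : (P : Subgroup K) = ⊤ := le_antisymm le_top htop
  have : IsPGroup p (⊤ : Subgroup K) := hPtop ▸ P.isPGroup'
  exact this.of_equiv Subgroup.topEquiv
end

section
/- Let G be a finite group and P a Sylow p-subgroup. If G = P·C_G(K) where K = ⟨x ∈ G : x^q = 1⟩ (q = p if p odd, q = 4 if p = 2), then P controls fusion of cyclic subgroups of order p (of order 2 and 4 when p = 2) in G. -/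
/-- `A` is a cyclic subgroup of order `p` (if `p` odd) or of order `2` or `4` (if `p = 2`). -/
def CpGroup {G : Type*} [Group G] (p : ℕ) (A : Subgroup G) : Prop :=
  (p ≠ 2 ∧ Nat.card A = p) ∨ (p = 2 ∧ IsCyclic A ∧ (Nat.card A = 2 ∨ Nat.card A = 4))

theorem cp_pow_eq_one {G : Type*} [Group G] {p : ℕ} {A : Subgroup G} (hA : CpGroup p A)
    {a : G} (ha : a ∈ A) : a ^ (if p = 2 then 4 else p) = 1 := by
  have key : (⟨a, ha⟩ : A) ^ (Nat.card A) = 1 := pow_card_eq_one'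
  have key' : a ^ (Nat.card A) = 1 := by
    have h := congrArg (Subtype.val) key
    push_cast at h
    exact h
  rcases hA with ⟨hp2, hcard⟩ | ⟨hp2, _, hcard⟩
  · rw [if_neg hp2, ← hcard]; exact key'
  · rw [if_pos hp2]
    rcases hcard with h | h
    · rw [h] at key'
      have : a ^ 4 = (a ^ 2) ^ 2 := by rw [← pow_mul]
      rw [this, key', one_pow]
    · rw [← h]; exact key'

theorem cp_isPGroup {G : Type*} [Group G] {p : ℕ} (hp : p.Prime) {A : Subgroup G}
    (hA : CpGroup p A) : IsPGroup p A := by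
  rcases hA with ⟨_, hcard⟩ | ⟨hp2, _, hcard⟩
  · exact IsPGroup.of_card (n := 1) (by rw [hcard, pow_one])
  · subst hp2
    rcases hcard with h | h
    · exact IsPGroup.of_card (n := 1) (by rw [h, pow_one])
    · exact IsPGroup.of_card (n := 2) (by rw [h]; norm_num)

theorem stmt_10 {G : Type*} [Group G] [Finite G] (p : ℕ) (hp : p.Prime) (P : Sylow p G)
    (hfac : ∀ g : G, ∃ x ∈ (P : Subgroup G),
      ∃ c ∈ Subgroup.centralizer
        ((Subgroup.closure {x : G | x ^ (if p = 2 then 4 else p) = 1} : Subgroup G) : Set G),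
      g = x * c) :
    (∀ A : Subgroup G, CpGroup p A → ∃ g : G, ∀ a ∈ A, g⁻¹ * a * g ∈ (P : Subgroup G)) ∧
    (∀ A : Subgroup G, A ≤ (P : Subgroup G) → CpGroup p A → ∀ g : G,
      (∀ a ∈ A, g⁻¹ * a * g ∈ (P : Subgroup G)) →
      ∃ c ∈ Subgroup.centralizer (A : Set G), ∃ x ∈ (P : Subgroup G), g = c * x) := by
  haveI : Fact p.Prime := ⟨hp⟩
  constructor
  · intro A hA
    obtain ⟨Q, hQ⟩ := (cp_isPGroup hp hA).exists_le_sylow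
    obtain ⟨g, hg⟩ := MulAction.exists_smul_eq G Q P
    refine ⟨g⁻¹, fun a ha => ?_⟩
    have : a ∈ (Q : Subgroup G) := hQ ha
    have h2 : g * a * g⁻¹ ∈ ((g • Q : Sylow p G) : Subgroup G) := by
      rw [Sylow.coe_subgroup_smul]
      exact Subgroup.smul_mem_pointwise_smul a (MulAut.conj g) Q this
    rw [hg] at h2
    simpa [mul_assoc] using h2
  · intro A _hAP hA g _hg
    obtain ⟨x, hx, c, hc, hgxc⟩ := hfac g
    refine ⟨x * c * x⁻¹, ?_, x, hx, by rw [hgxc]; group⟩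
    rw [Subgroup.mem_centralizer_iff]
    intro a ha
    have hmem : x⁻¹ * a * x ∈ Subgroup.closure {y : G | y ^ (if p = 2 then 4 else p) = 1} := by
      apply Subgroup.subset_closure
      show (x⁻¹ * a * x) ^ (if p = 2 then 4 else p) = 1
      rw [show x⁻¹ * a * x = x⁻¹ * a * (x⁻¹)⁻¹ by rw [inv_inv], conj_pow,
        cp_pow_eq_one hA ha, mul_one]
      group
    have := hc _ hmem
    -- this : (x⁻¹ * a * x) * c = c * (x⁻¹ * a * x)
    have h2 := congrArg (fun z => x * z * x⁻¹) this
    simpa [mul_assoc] using h2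
end

section
/- Let f : A → B be an F-isomorphism of commutative F_p-algebras (the kernel of f is a nil ideal, and for every b ∈ B there exists k ≥ 0 with b^{p^k} ∈ im f). Then the map sending a radical ideal 𝔞 of A to the radical of the ideal generated by f(𝔞), with inverse sending a radical ideal 𝔟 of B to f⁻¹(𝔟), is a bijection between radical ideals of A and radical ideals of B. -/
private lemma key_pow_mem {A B : Type*} [CommRing A] [CommRing B] (p : ℕ) [Fact p.Prime]
    [CharP B p] (f : A →+* B) (hsurj : ∀ b : B, ∃ k : ℕ, b ^ p ^ k ∈ f.range)
    (I : Ideal A) {b : B} (hb : b ∈ I.map f) :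
    ∃ k : ℕ, ∃ a ∈ I, f a = b ^ p ^ k := by
  have hp : p.Prime := Fact.out
  refine Submodule.span_induction ?_ ?_ ?_ ?_ hb
  · rintro x ⟨a, ha, rfl⟩
    exact ⟨0, a, ha, by simp⟩
  · exact ⟨0, 0, I.zero_mem, by simp⟩
  · rintro x y hx hy ⟨k1, a1, h1, e1⟩ ⟨k2, a2, h2, e2⟩
    refine ⟨k1 + k2, a1 ^ p ^ k2 + a2 ^ p ^ k1,
      I.add_mem (I.pow_mem_of_mem h1 _ (pow_pos hp.pos _))
        (I.pow_mem_of_mem h2 _ (pow_pos hp.pos _)), ?_⟩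
    rw [add_pow_char_pow, map_add, map_pow, map_pow, e1, e2, ← pow_mul, ← pow_mul,
      ← pow_add, ← pow_add, Nat.add_comm k2 k1]
  · rintro c x hx ⟨k0, a0, h0, e0⟩
    obtain ⟨m, d, hd⟩ := hsurj c
    refine ⟨m + k0, d ^ p ^ k0 * a0 ^ p ^ m,
      I.mul_mem_left _ (I.pow_mem_of_mem h0 _ (pow_pos hp.pos _)), ?_⟩
    rw [smul_eq_mul, mul_pow, map_mul, map_pow, map_pow, e0, hd, ← pow_mul, ← pow_mul,
      ← pow_add, ← pow_add, Nat.add_comm k0 m]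

theorem stmt_11 {A B : Type*} [CommRing A] [CommRing B] (p : ℕ) (hp : p.Prime)
    [Algebra (ZMod p) A] [Algebra (ZMod p) B] (f : A →+* B)
    (hker : ∀ a ∈ RingHom.ker f, IsNilpotent a)
    (hsurj : ∀ b : B, ∃ k : ℕ, b ^ p ^ k ∈ f.range) :
    (∀ I : Ideal A, I.IsRadical → ((I.map f).radical).comap f = I) ∧
    (∀ J : Ideal B, J.IsRadical → (((J.comap f).map f).radical) = J) ∧
    (∀ I : Ideal A, ((I.map f).radical).IsRadical) ∧
    (∀ J : Ideal B, J.IsRadical → (J.comap f).IsRadical) := by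
  haveI : Fact p.Prime := ⟨hp⟩
  refine ⟨?_, ?_, fun I => Ideal.radical_isRadical _, fun J hJ => hJ.comap f⟩
  · -- part (1)
    intro I hI
    rcases subsingleton_or_nontrivial B with hB | hB
    · have hItop : I = ⊤ := by
        rw [Ideal.eq_top_iff_one]
        have h1 : (1 : A) ∈ RingHom.ker f := by
          simp [RingHom.mem_ker, Subsingleton.elim (f 1) 0]
        obtain ⟨m, hm⟩ := hker _ h1
        exact hI ⟨m, hm ▸ I.zero_mem⟩
      have : ((I.map f).radical).comap f = ⊤ := by
        rw [Ideal.eq_top_iff_one]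
        exact Ideal.mem_comap.2 (Ideal.le_radical (Subsingleton.elim (f 1) 0 ▸
          ((I.map f).zero_mem)))
      rw [this, hItop]
    · haveI : CharP B p := charP_of_injective_ringHom (algebraMap (ZMod p) B).injective p
      apply le_antisymm
      · intro a ha
        obtain ⟨n, hn⟩ := Ideal.mem_radical_iff.1 (Ideal.mem_comap.1 ha)
        obtain ⟨k, c, hc, hfc⟩ := key_pow_mem p f hsurj I hn
        have hker' : a ^ (n * p ^ k) - c ∈ RingHom.ker f := by
          rw [RingHom.mem_ker, map_sub, map_pow, pow_mul, hfc, sub_self]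
        obtain ⟨m, hm⟩ := hker _ hker'
        have h1 : a ^ (n * p ^ k) - c ∈ I := hI ⟨m, hm ▸ I.zero_mem⟩
        have h2 : a ^ (n * p ^ k) ∈ I := by
          have := I.add_mem h1 hc
          simpa using this
        exact hI ⟨n * p ^ k, h2⟩
      · exact fun a ha => Ideal.mem_comap.2 (Ideal.le_radical (Ideal.mem_map_of_mem f ha))
  · -- part (2)
    intro J hJ
    apply le_antisymm
    · exact le_trans (Ideal.radical_mono Ideal.map_comap_le) hJ
    · intro b hb
      obtain ⟨k, a, ha⟩ := hsurj b
      refine Ideal.mem_radical_iff.2 ⟨p ^ k, ?_⟩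
      rw [← ha]
      exact Ideal.mem_map_of_mem f (Ideal.mem_comap.2 (ha ▸ J.pow_mem_of_mem hb _
        (pow_pos hp.pos _)))
end

section
/- Let f : A → B be an F-isomorphism of commutative F_p-algebras. Then the induced map Spec(B) → Spec(A), 𝔮 ↦ f⁻¹(𝔮), is a homeomorphism of Zariski spectra. -/
theorem stmt_12 {A B : Type*} [CommRing A] [CommRing B] (p : ℕ) (hp : p.Prime)
    [Algebra (ZMod p) A] [Algebra (ZMod p) B] (f : A →+* B)
    (hker : ∀ a ∈ RingHom.ker f, IsNilpotent a)
    (hsurj : ∀ b : B, ∃ k : ℕ, b ^ p ^ k ∈ f.range) :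
    IsHomeomorph (PrimeSpectrum.comap f) := by
  have hint : f.IsIntegral := by
    intro b
    obtain ⟨k, a, ha⟩ := hsurj b
    refine ⟨Polynomial.X ^ (p ^ k) - Polynomial.C a, ?_, ?_⟩
    · exact Polynomial.monic_X_pow_sub_C a (pow_ne_zero k hp.ne_zero)
    · simp [Polynomial.eval₂_sub, ha]
  rw [isHomeomorph_iff_continuous_isClosedMap_bijective]
  refine ⟨PrimeSpectrum.continuous_comap f, PrimeSpectrum.isClosedMap_comap_of_isIntegral f hint, ?_, ?_⟩
  · -- injective
    intro q₁ q₂ h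
    have key : ∀ q₁' q₂' : PrimeSpectrum B,
        PrimeSpectrum.comap f q₁' = PrimeSpectrum.comap f q₂' → q₁'.asIdeal ≤ q₂'.asIdeal := by
      intro q₁' q₂' h' b hb
      obtain ⟨k, a, ha⟩ := hsurj b
      have h1 : a ∈ (PrimeSpectrum.comap f q₁').asIdeal := by
        show f a ∈ q₁'.asIdeal
        rw [ha]; exact Ideal.pow_mem_of_mem _ hb _ (pow_pos hp.pos k)
      rw [h'] at h1
      have h2 : b ^ p ^ k ∈ q₂'.asIdeal := ha ▸ h1
      exact q₂'.isPrime.mem_of_pow_mem _ h2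
    exact PrimeSpectrum.ext (le_antisymm (key _ _ h) (key _ _ h.symm))
  · -- surjective
    intro P
    algebraize [f]
    have : Algebra.IsIntegral A B := ⟨hint⟩
    have hIP : (⊥ : Ideal B).comap (algebraMap A B) ≤ P.asIdeal := by
      intro a ha
      obtain ⟨n, hn⟩ := hker a ha
      exact P.isPrime.mem_of_pow_mem n (hn ▸ P.asIdeal.zero_mem)
    obtain ⟨Q, -, hQ, hQ'⟩ :=
      Ideal.exists_ideal_over_prime_of_isIntegral P.asIdeal ⊥ hIP
    exact ⟨⟨Q, hQ⟩, PrimeSpectrum.ext hQ'⟩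
end

section
/- Let f : A → B be an F-isomorphism of commutative F_p-algebras. Then for every radical ideal 𝔞 of A one has f⁻¹(√(f(𝔞)·B)) = 𝔞. -/
lemma key_13 {A B : Type*} [CommRing A] [CommRing B] (p : ℕ) (hp : p.Prime) [CharP B p]
    (f : A →+* B) (hsurj : ∀ b : B, ∃ k : ℕ, b ^ p ^ k ∈ f.range)
    (I : Ideal A) {y : B} (hy : y ∈ I.map f) :
    ∃ k : ℕ, ∃ x ∈ I, f x = y ^ p ^ k := by
  haveI : Fact p.Prime := ⟨hp⟩
  haveI : ExpChar B p := .prime hp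
  refine Submodule.span_induction ?_ ?_ ?_ ?_ hy
  · rintro y ⟨x, hx, rfl⟩
    exact ⟨0, x, hx, by simp⟩
  · exact ⟨0, 0, I.zero_mem, by simp⟩
  · rintro y z - - ⟨k, x, hx, hfx⟩ ⟨l, w, hw, hfw⟩
    refine ⟨max k l, x ^ p ^ (max k l - k) + w ^ p ^ (max k l - l),
      I.add_mem (I.pow_mem_of_mem hx _ (pow_pos hp.pos _)) (I.pow_mem_of_mem hw _ (pow_pos hp.pos _)),
      ?_⟩
    rw [map_add, map_pow, map_pow, hfx, hfw, ← pow_mul, ← pow_mul, ← pow_add, ← pow_add,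
      Nat.add_sub_cancel' (le_max_left k l), Nat.add_sub_cancel' (le_max_right k l),
      add_pow_char_pow]
  · rintro b y - ⟨k, x, hx, hfx⟩
    obtain ⟨j, c, hc⟩ := hsurj b
    refine ⟨k + j, c ^ p ^ k * x ^ p ^ j, I.mul_mem_left _ (I.pow_mem_of_mem hx _ (pow_pos hp.pos _)),
      ?_⟩
    rw [smul_eq_mul, mul_pow, map_mul, map_pow, map_pow, hc, hfx, ← pow_mul, ← pow_mul,
      ← pow_add, ← pow_add, add_comm j k]

theorem stmt_13 {A B : Type*} [CommRing A] [CommRing B] (p : ℕ) (hp : p.Prime)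
    [Algebra (ZMod p) A] [Algebra (ZMod p) B] (f : A →+* B)
    (hker : ∀ a ∈ RingHom.ker f, IsNilpotent a)
    (hsurj : ∀ b : B, ∃ k : ℕ, b ^ p ^ k ∈ f.range) :
    ∀ I : Ideal A, I.IsRadical → ((I.map f).radical).comap f = I := by
  haveI : Fact p.Prime := ⟨hp⟩
  intro I hrad
  ext a
  simp only [Ideal.mem_comap]
  constructor
  · intro ha
    rcases subsingleton_or_nontrivial B with hB | hB
    · obtain ⟨m, hm⟩ := hker a (by exact Subsingleton.elim _ _)
      exact hrad ⟨m, hm ▸ I.zero_mem⟩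
    · haveI : CharP B p := charP_of_injective_algebraMap (algebraMap (ZMod p) B).injective p
      obtain ⟨n, hn⟩ := Ideal.mem_radical_iff.mp ha
      obtain ⟨k, x, hx, hfx⟩ := key_13 p hp f hsurj I hn
      have : f (a ^ (n * p ^ k) - x) = 0 := by
        rw [map_sub, map_pow, hfx, pow_mul, sub_self]
      obtain ⟨m, hm⟩ := hker _ this
      have h1 : a ^ (n * p ^ k) - x ∈ I := hrad ⟨m, hm ▸ I.zero_mem⟩
      have h2 : a ^ (n * p ^ k) ∈ I := by
        have := I.add_mem h1 hx
        simpa using this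
      exact hrad ⟨n * p ^ k, h2⟩
  · intro ha
    exact Ideal.le_radical (Ideal.mem_map_of_mem f ha)
end

section
/- Let G be a finite p-group, g an automorphism of G of order coprime to p, and suppose that g fixes every element of G of order p if p is odd, respectively every element of order 2 and 4 if p = 2. Then g is the identity automorphism. -/
open Subgroup MulAction

universe u

section Prelim

variable {G : Type u} [Group G]

private lemma myPowShift {a b c : G} (hc : ∀ x : G, c * x = x * c) (hba : b * a = a * b * c) :
    ∀ n : ℕ, b ^ n * a = a * b ^ n * c ^ n := by
  intro n
  induction n with
  | zero => simp
  | succ n ih =>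
    calc b ^ (n + 1) * a = b * (b ^ n * a) := by rw [pow_succ']; group
      _ = b * (a * b ^ n * c ^ n) := by rw [ih]
      _ = (b * a) * b ^ n * c ^ n := by group
      _ = (a * b * c) * b ^ n * c ^ n := by rw [hba]
      _ = a * b * (c * b ^ n) * c ^ n := by group
      _ = a * b * (b ^ n * c) * c ^ n := by rw [hc (b ^ n)]
      _ = a * (b * b ^ n) * (c * c ^ n) := by group
      _ = a * b ^ (n + 1) * c ^ (n + 1) := by rw [← pow_succ', ← pow_succ']

private lemma myCentralPow {a b c : G} (hc : ∀ x : G, c * x = x * c) (hba : b * a = a * b * c) :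
    ∀ n : ℕ, (a * b) ^ n = a ^ n * b ^ n * c ^ (n.choose 2) := by
  have hck : ∀ (k : ℕ) (x : G), c ^ k * x = x * c ^ k := fun k x => Commute.pow_left (hc x) k
  intro n
  induction n with
  | zero => simp
  | succ n ih =>
    have hchoose : (n + 1).choose 2 = n.choose 2 + n := by
      rw [Nat.choose_succ_succ, Nat.choose_one_right, Nat.add_comm]
    calc (a * b) ^ (n + 1) = (a ^ n * b ^ n * c ^ n.choose 2) * (a * b) := by
          rw [pow_succ, ih]
      _ = a ^ n * (b ^ n * (c ^ n.choose 2 * a)) * b := by group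
      _ = a ^ n * (b ^ n * (a * c ^ n.choose 2)) * b := by
          rw [hck (n.choose 2) a]
      _ = a ^ n * (b ^ n * a) * (c ^ n.choose 2 * b) := by group
      _ = a ^ n * (b ^ n * a) * (b * c ^ n.choose 2) := by rw [hck (n.choose 2) b]
      _ = a ^ n * (a * b ^ n * c ^ n) * (b * c ^ n.choose 2) := by rw [myPowShift hc hba n]
      _ = (a ^ n * a) * (b ^ n * (c ^ n * b)) * c ^ n.choose 2 := by group
      _ = (a ^ n * a) * (b ^ n * (b * c ^ n)) * c ^ n.choose 2 := by rw [hck n b]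
      _ = (a ^ n * a) * (b ^ n * b) * (c ^ n * c ^ n.choose 2) := by group
      _ = a ^ (n + 1) * b ^ (n + 1) * c ^ ((n + 1).choose 2) := by
          rw [← pow_succ, ← pow_succ, ← pow_add, hchoose, Nat.add_comm (n.choose 2) n]

/-- restriction of an automorphism to an invariant subgroup -/
private def restrictAut (g : MulAut G) (H : Subgroup G) (h1 : ∀ x ∈ H, g x ∈ H)
    (h2 : ∀ x ∈ H, g⁻¹ x ∈ H) : MulAut ↥H where
  toFun x := ⟨g x, h1 x x.2⟩
  invFun x := ⟨g⁻¹ x, h2 x x.2⟩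
  left_inv x := Subtype.ext (by simp [MulAut.inv_def])
  right_inv x := Subtype.ext (by simp [MulAut.inv_def])
  map_mul' x y := Subtype.ext (by simp)

private lemma restrictAut_pow (g : MulAut G) (H : Subgroup G) (h1 : ∀ x ∈ H, g x ∈ H)
    (h2 : ∀ x ∈ H, g⁻¹ x ∈ H) (k : ℕ) (x : ↥H) :
    (((restrictAut g H h1 h2 ^ k) x : ↥H) : G) = (g ^ k) (x : G) := by
  induction k with
  | zero => simp
  | succ k ih =>
    rw [pow_succ', pow_succ', MulAut.mul_apply, MulAut.mul_apply]
    have : ((restrictAut g H h1 h2) ((restrictAut g H h1 h2 ^ k) x) : G)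
        = g (((restrictAut g H h1 h2 ^ k) x : ↥H) : G) := rfl
    rw [this, ih]

/-- In a finite `p`-group, a nontrivial normal subgroup meets the center nontrivially. -/
private lemma exists_center_inter {H : Type u} [Group H] [Finite H] {p : ℕ} (hp : p.Prime)
    (hH : IsPGroup p H) (N : Subgroup H) [hN : N.Normal] (hbot : N ≠ ⊥) :
    ∃ z : H, z ∈ N ∧ z ∈ Subgroup.center H ∧ z ≠ 1 := by
  haveI : Fact p.Prime := ⟨hp⟩
  have hPC : IsPGroup p (ConjAct H) := hH.of_equiv ConjAct.toConjAct
  have hdvd : p ∣ Nat.card ↥N := by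
    obtain ⟨k, hk⟩ := IsPGroup.iff_card.mp (hH.to_subgroup N)
    have h1 : 1 < Nat.card ↥N := N.one_lt_card_iff_ne_bot.mpr hbot
    rw [hk] at h1 ⊢
    exact dvd_pow_self p (fun h => by simp [h] at h1)
  have h1fix : (1 : ↥N) ∈ fixedPoints (ConjAct H) ↥N := fun q => smul_one q
  obtain ⟨b, hb, hb1⟩ := hPC.exists_fixed_point_of_prime_dvd_card_of_fixed_point ↥N hdvd h1fix
  refine ⟨(b : H), b.2, ?_, ?_⟩
  · rw [Subgroup.mem_center_iff]
    intro γ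
    have h3 := hb (ConjAct.toConjAct γ)
    have h4 : γ * (b : H) * γ⁻¹ = (b : H) := by
      have h5 : ConjAct.toConjAct γ • (b : H) = (b : H) := congrArg (Subtype.val) h3
      rwa [ConjAct.smul_def, ConjAct.ofConjAct_toConjAct] at h5
    calc γ * (b : H) = (γ * (b : H) * γ⁻¹) * γ := by group
      _ = (b : H) * γ := by rw [h4]
  · intro h
    exact hb1 (Subtype.ext h.symm)

end Prelim

private theorem key : ∀ (n : ℕ) {G : Type u} [Group G] [Finite G] (p : ℕ) (_hp : p.Prime)
    (_hG : IsPGroup p G) (g : MulAut G), Nat.card G ≤ n → Nat.Coprime (orderOf g) p →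
    (∀ x : G, x ^ (if p = 2 then 4 else p) = 1 → g x = x) → g = 1 := by
  intro n
  induction n with
  | zero =>
    intro G _ _ p hp hG g hcard hord hfix
    have : 0 < Nat.card G := Nat.card_pos
    omega
  | succ n IH =>
    intro G _ _ p hp hG g hcard hord hfix
    -- inverse invariance of invariant subgroups
    have hinv : ∀ (H : Subgroup G), (∀ x ∈ H, g x ∈ H) → ∀ x ∈ H, g⁻¹ x ∈ H := by
      intro H h1 x hx
      have hf : Function.Injective (fun y : ↥H => (⟨g y, h1 y y.2⟩ : ↥H)) := by
        intro u v huv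
        have h3 : g u = g v := congrArg Subtype.val huv
        exact Subtype.ext (g.injective h3)
      obtain ⟨y, hy⟩ := Finite.surjective_of_injective hf ⟨x, hx⟩
      have h4 : g y = x := congrArg Subtype.val hy
      have h5 : (g⁻¹ : MulAut G) x = y := by
        rw [← h4, MulAut.inv_def]; exact g.symm_apply_apply _
      rw [h5]; exact y.2
    -- proper invariant subgroups are pointwise fixed
    have hsub : ∀ (H : Subgroup G), H ≠ ⊤ → (∀ x ∈ H, g x ∈ H) → ∀ x ∈ H, g x = x := by
      intro H hne h1 x hx
      have h2 := hinv H h1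
      have hrpow : restrictAut g H h1 h2 ^ orderOf g = 1 := by
        apply MulEquiv.ext
        intro y
        apply Subtype.ext
        have h3 := restrictAut_pow g H h1 h2 (orderOf g) y
        rw [pow_orderOf_eq_one g] at h3
        simpa using h3
      have hdvd : orderOf (restrictAut g H h1 h2) ∣ orderOf g :=
        orderOf_dvd_of_pow_eq_one hrpow
      have hcop : Nat.Coprime (orderOf (restrictAut g H h1 h2)) p :=
        Nat.Coprime.coprime_dvd_left hdvd hord
      have hcd : Nat.card ↥H < Nat.card G := by
        have hss : (H : Set G) ⊂ (Set.univ : Set G) := by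
          refine Set.ssubset_univ_iff.mpr ?_
          intro hcoe
          exact hne (Subgroup.coe_eq_univ.mp hcoe)
        have := Set.ncard_lt_ncard hss Set.finite_univ
        rwa [Set.ncard_univ, ← Nat.card_coe_set_eq] at this
      have hres : restrictAut g H h1 h2 = 1 := by
        refine IH p hp (hG.to_subgroup H) (restrictAut g H h1 h2) (by omega) hcop ?_
        intro y hy
        have hyG : (y : G) ^ (if p = 2 then 4 else p) = 1 := by
          exact_mod_cast congrArg Subtype.val hy
        exact Subtype.ext (hfix (y : G) hyG)
      have h6 : restrictAut g H h1 h2 ⟨x, hx⟩ = ⟨x, hx⟩ := by rw [hres]; rfl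
      exact congrArg Subtype.val h6
    -- stability
    have hstab : ∀ (A : Subgroup G), (∀ a ∈ A, g a = a) → (∀ x : G, x⁻¹ * g x ∈ A) → g = 1 := by
      intro A hfixA hcomm
      apply MulEquiv.ext
      intro x
      have hcA : x⁻¹ * g x ∈ A := hcomm x
      set c := x⁻¹ * g x with hc
      have hgc : g c = c := hfixA c hcA
      have hgx : g x = x * c := by rw [hc]; group
      have hk : ∀ k : ℕ, (g ^ k) x = x * c ^ k := by
        intro k
        induction k with
        | zero => simp
        | succ k ih =>
          rw [pow_succ', MulAut.mul_apply, ih, map_mul, hgx, map_pow, hgc,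
            mul_assoc, ← pow_succ']
      have h1 : x * c ^ orderOf g = x := by
        rw [← hk, pow_orderOf_eq_one]; simp
      have hc1 : c ^ orderOf g = 1 := by
        have h8 : x * c ^ orderOf g = x * 1 := by rw [h1, mul_one]
        exact mul_left_cancel h8
      obtain ⟨k, hk2⟩ := hG c
      have hcop2 : Nat.Coprime (orderOf c) p :=
        Nat.Coprime.coprime_dvd_left (orderOf_dvd_of_pow_eq_one hc1) hord
      have hone : orderOf c = 1 :=
        Nat.Coprime.eq_one_of_dvd (hcop2.pow_right k) (orderOf_dvd_of_pow_eq_one hk2)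
      have hcone : c = 1 := orderOf_eq_one_iff.mp hone
      have : g x = x * 1 := by rw [← hcone, ← hgx]
      simpa using this
    by_cases h2 : ∀ a b : G, a * b * a⁻¹ * b⁻¹ ∈ Subgroup.center G
    · -- class ≤ 2 case
      classical
      by_contra hg1
      have hex : ∃ m : ℕ, ∃ y : G, g y ≠ y ∧ orderOf y = m := by
        have : ∃ x : G, g x ≠ x := by
          by_contra hcon
          push_neg at hcon
          exact hg1 (MulEquiv.ext fun x => (hcon x).trans rfl)
        obtain ⟨x₀, hx₀⟩ := this
        exact ⟨orderOf x₀, x₀, hx₀, rfl⟩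
      obtain ⟨x, hx, hxord⟩ := Nat.find_spec hex
      have hmin : ∀ y : G, orderOf y < orderOf x → g y = y := by
        intro y hy
        by_contra hgy
        have := Nat.find_min' hex ⟨y, hgy, rfl⟩
        omega
      have hxne : x ≠ 1 := fun h => hx (by rw [h, map_one])
      -- order of x is a power of p
      obtain ⟨k₀, hk₀⟩ := hG x
      obtain ⟨m, hmle, hmord⟩ := (Nat.dvd_prime_pow hp).mp (orderOf_dvd_of_pow_eq_one hk₀)
      have hm1 : m ≠ 0 := by
        intro h
        rw [h, pow_zero] at hmord
        exact hxne (orderOf_eq_one_iff.mp hmord)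
      -- x^p has smaller order, hence is fixed
      have hxp : g (x ^ p) = x ^ p := by
        apply hmin
        have hdvd : orderOf (x ^ p) ∣ p ^ (m - 1) := by
          apply orderOf_dvd_of_pow_eq_one
          rw [← pow_mul, ← pow_succ']
          have : p ^ (m - 1 + 1) = p ^ m := by congr 1; omega
          rw [this, ← hmord, pow_orderOf_eq_one]
        calc orderOf (x ^ p) ≤ p ^ (m - 1) :=
              Nat.le_of_dvd (Nat.pow_pos hp.pos) hdvd
          _ < p ^ m := Nat.pow_lt_pow_right hp.one_lt (by omega)
          _ = orderOf x := hmord.symm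
      -- x^p is central
      have hxpc : x ^ p ∈ Subgroup.center G := by
        by_cases hK : Subgroup.centralizer {x ^ p} = ⊤
        · rw [Subgroup.mem_center_iff]
          intro γ
          have hγ : γ ∈ Subgroup.centralizer {x ^ p} := by rw [hK]; trivial
          exact (Subgroup.mem_centralizer_iff.mp hγ (x ^ p) rfl).symm
        · exfalso
          apply hx
          refine hsub _ hK ?_ x ?_
          · intro y hy
            have hy' := Subgroup.mem_centralizer_iff.mp hy (x ^ p) rfl
            refine Subgroup.mem_centralizer_iff.mpr ?_
            intro w hw
            rw [Set.mem_singleton_iff] at hw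
            subst hw
            calc x ^ p * g y = g (x ^ p) * g y := by rw [hxp]
              _ = g (x ^ p * y) := by rw [map_mul]
              _ = g (y * x ^ p) := by rw [hy']
              _ = g y * g (x ^ p) := by rw [map_mul]
              _ = g y * x ^ p := by rw [hxp]
          · refine Subgroup.mem_centralizer_iff.mpr ?_
            intro w hw
            rw [Set.mem_singleton_iff] at hw
            subst hw
            exact (Commute.self_pow x p).symm
      have hxpcomm : ∀ y : G, y * x ^ p = x ^ p * y :=
        fun y => Subgroup.mem_center_iff.mp hxpc y
      set b := g x with hb
      set c := b⁻¹ * x * b * x⁻¹ with hcdef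
      have hccen : c ∈ Subgroup.center G := by
        have h3 := h2 b⁻¹ x
        have : b⁻¹ * x * b⁻¹⁻¹ * x⁻¹ = c := by rw [hcdef, inv_inv]
        rwa [this] at h3
      have hcc : ∀ y : G, c * y = y * c :=
        fun y => (Subgroup.mem_center_iff.mp hccen y).symm
      have hba : b * x⁻¹ = x⁻¹ * b * c := by rw [hcdef]; group
      have hbp : b ^ p = x ^ p := by rw [hb, ← map_pow, hxp]
      have hdp : (x⁻¹ * b) ^ p = c ^ p.choose 2 := by
        rw [myCentralPow hcc hba p, inv_pow, hbp, inv_mul_cancel, one_mul]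
      have hcp : c ^ p = 1 := by
        have h4 : b⁻¹ * x * b = c * x := by rw [hcdef]; group
        have h5 : b⁻¹ * x ^ p * b = (c * x) ^ p := by
          rw [← h4]
          have : b⁻¹ * x * b = b⁻¹ * x * b⁻¹⁻¹ := by rw [inv_inv]
          rw [this, conj_pow, inv_inv]
        have h6 : b⁻¹ * x ^ p * b = x ^ p := by
          rw [hxpcomm b⁻¹]
          group
        have h7 : (c * x) ^ p = c ^ p * x ^ p := by
          exact Commute.mul_pow (show Commute c x from hcc x) p
        rw [h6, h7] at h5
        have : x ^ p = c ^ p * x ^ p := h5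
        exact (right_eq_mul.mp this)
      set d := x⁻¹ * b with hd
      have hd4 : d ^ (if p = 2 then 4 else p) = 1 := by
        by_cases hp2 : p = 2
        · rw [if_pos hp2]
          have hd2 : d ^ 2 = c := by
            have h12 := hdp
            rw [hp2, Nat.choose_self, pow_one] at h12
            exact h12
          have h13 : d ^ 4 = (d ^ 2) ^ 2 := by rw [← pow_mul]
          rw [h13, hd2]
          have h14 := hcp
          rw [hp2] at h14
          exact h14
        · rw [if_neg hp2]
          have h2lt : 2 < p := lt_of_le_of_ne hp.two_le (Ne.symm hp2)
          obtain ⟨t, ht⟩ := Nat.Prime.dvd_choose_self hp (by norm_num) h2lt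
          rw [hd, hdp, ht, pow_mul, hcp, one_pow]
      have hgd : g d = d := hfix d hd4
      have hgx2 : g x = x * d := by rw [hd, hb]; group
      have hk : ∀ k : ℕ, (g ^ k) x = x * d ^ k := by
        intro k
        induction k with
        | zero => simp
        | succ k ih =>
          rw [pow_succ', MulAut.mul_apply, ih, map_mul, hgx2, map_pow, hgd,
            mul_assoc, ← pow_succ']
      have hdQ : d ^ orderOf g = 1 := by
        have h9 : x * d ^ orderOf g = x := by
          rw [← hk, pow_orderOf_eq_one]; simp
        have h10 : x * d ^ orderOf g = x * 1 := by rw [h9, mul_one]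
        exact mul_left_cancel h10
      have hdp2 : d ^ (p ^ 2) = 1 := by
        by_cases hp2 : p = 2
        · rw [hp2]
          have h11 : d ^ 4 = 1 := by
            have := hd4
            rw [if_pos hp2] at this
            exact this
          norm_num
          exact h11
        · have h11 : d ^ p = 1 := by
            have := hd4
            rw [if_neg hp2] at this
            exact this
          rw [pow_two, pow_mul, h11, one_pow]
      have hcopd : Nat.Coprime (orderOf d) p :=
        Nat.Coprime.coprime_dvd_left (orderOf_dvd_of_pow_eq_one hdQ) hord
      have hone : orderOf d = 1 :=
        Nat.Coprime.eq_one_of_dvd (hcopd.pow_right 2) (orderOf_dvd_of_pow_eq_one hdp2)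
      have hd1 : d = 1 := orderOf_eq_one_iff.mp hone
      apply hx
      show g x = x
      rw [hgx2, hd1, mul_one]
    · -- non class 2 case
      classical
      have hSne : (⊥ : Subgroup G) ∈ {A : Subgroup G |
          (∀ x ∈ A, g x ∈ A) ∧ A.Normal ∧ ∀ a ∈ A, ∀ b ∈ A, a * b = b * a} := by
        refine ⟨?_, inferInstance, ?_⟩
        · intro x hx
          rw [Subgroup.mem_bot] at hx
          subst hx
          simp [Subgroup.mem_bot]
        · intro a ha b hb
          rw [Subgroup.mem_bot] at ha hb
          subst ha; subst hb; rfl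
      haveI : Finite (Subgroup G) := Finite.of_injective _ SetLike.coe_injective
      obtain ⟨A, hAS, hAmax⟩ := Set.Finite.exists_maximalFor id _ (Set.toFinite _) ⟨⊥, hSne⟩
      obtain ⟨hAg, hAnorm, hAab⟩ := hAS
      haveI := hAnorm
      have hAtop : A ≠ ⊤ := by
        intro htop
        apply h2
        intro u v
        have hcomm : u * v = v * u :=
          hAab u (htop ▸ Subgroup.mem_top u) v (htop ▸ Subgroup.mem_top v)
        have h1 : u * v * u⁻¹ * v⁻¹ = 1 := by rw [hcomm]; group
        rw [h1]; exact Subgroup.one_mem _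
      set C := Subgroup.centralizer (A : Set G) with hCdef
      have hAC : A ≤ C := by
        intro a ha
        exact Subgroup.mem_centralizer_iff.mpr (fun b hb => hAab b hb a ha)
      have hCg : ∀ x ∈ C, g x ∈ C := by
        intro x hx
        refine Subgroup.mem_centralizer_iff.mpr ?_
        intro a ha
        have h1 : g⁻¹ a ∈ A := hinv A hAg a ha
        have h3 : g⁻¹ a * x = x * g⁻¹ a := Subgroup.mem_centralizer_iff.mp hx _ h1
        have h4 : g (g⁻¹ a) = a := by rw [MulAut.inv_def]; exact g.apply_symm_apply a
        calc a * g x = g (g⁻¹ a) * g x := by rw [h4]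
          _ = g (g⁻¹ a * x) := by rw [map_mul]
          _ = g (x * g⁻¹ a) := by rw [h3]
          _ = g x * g (g⁻¹ a) := by rw [map_mul]
          _ = g x * a := by rw [h4]
      by_cases hCA : C ≤ A
      · -- C = A : stability applies
        have hAfix : ∀ a ∈ A, g a = a := hsub A hAtop hAg
        refine hstab A hAfix ?_
        intro x
        apply hCA
        refine Subgroup.mem_centralizer_iff.mpr ?_
        intro a ha
        have h1 : x * a * x⁻¹ ∈ A := hAnorm.conj_mem a ha x
        have h3 : g x * a * (g x)⁻¹ = x * a * x⁻¹ := by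
          have h5 : g (x * a * x⁻¹) = x * a * x⁻¹ := hAfix _ h1
          rw [← h5, map_mul, map_mul, map_inv, hAfix a ha]
        have h6 : (x⁻¹ * g x) * a * (x⁻¹ * g x)⁻¹ = a := by
          calc x⁻¹ * g x * a * (x⁻¹ * g x)⁻¹ = x⁻¹ * (g x * a * (g x)⁻¹) * x := by group
            _ = x⁻¹ * (x * a * x⁻¹) * x := by rw [h3]
            _ = a := by group
        calc a * (x⁻¹ * g x) = ((x⁻¹ * g x) * a * (x⁻¹ * g x)⁻¹) * (x⁻¹ * g x) := by rw [h6]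
          _ = (x⁻¹ * g x) * a := by group
      · -- C ⊄ A : derive a contradiction
        exfalso
        obtain ⟨c₀, hc₀C, hc₀A⟩ := SetLike.not_le_iff_exists.mp hCA
        have hCnorm : C.Normal := by
          constructor
          intro y hy γ
          refine Subgroup.mem_centralizer_iff.mpr ?_
          intro a ha
          have h1 : γ⁻¹ * a * γ ∈ A := by
            have h3 := hAnorm.conj_mem a ha γ⁻¹
            rwa [inv_inv] at h3
          have h3 : (γ⁻¹ * a * γ) * y = y * (γ⁻¹ * a * γ) :=
            Subgroup.mem_centralizer_iff.mp hy _ h1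
          calc a * (γ * y * γ⁻¹) = γ * ((γ⁻¹ * a * γ) * y) * γ⁻¹ := by group
            _ = γ * (y * (γ⁻¹ * a * γ)) * γ⁻¹ := by rw [h3]
            _ = (γ * y * γ⁻¹) * a := by group
        set π := QuotientGroup.mk' A with hπ
        haveI hNmap : (Subgroup.map π C).Normal := hCnorm.map π (QuotientGroup.mk'_surjective A)
        have hbot : Subgroup.map π C ≠ ⊥ := by
          intro hB
          have h1 : π c₀ ∈ Subgroup.map π C := Subgroup.mem_map_of_mem π hc₀C
          rw [hB, Subgroup.mem_bot] at h1
          exact hc₀A ((QuotientGroup.eq_one_iff c₀).mp h1)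
        obtain ⟨z, hzN, hzc, hz1⟩ :=
          exists_center_inter hp (hG.to_quotient A) (Subgroup.map π C) hbot
        obtain ⟨cc, hccC, hccz⟩ := Subgroup.mem_map.mp hzN
        have hccA : cc ∉ A := by
          intro h
          exact hz1 (by rw [← hccz]; exact (QuotientGroup.eq_one_iff cc).mpr h)
        have hZmem : ∀ x : G,
            ((π x) ∈ Subgroup.center (G ⧸ A)) ↔ ∀ γ : G, x⁻¹ * γ⁻¹ * x * γ ∈ A := by
          intro x
          rw [Subgroup.mem_center_iff]
          constructor
          · intro h γ
            have h1 := h (π γ)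
            rw [← map_mul, ← map_mul] at h1
            have h3 : ((γ * x : G) : G ⧸ A) = ((x * γ : G) : G ⧸ A) := h1
            have h4 := QuotientGroup.eq.mp h3
            have h5 : (γ * x)⁻¹ * (x * γ) = x⁻¹ * γ⁻¹ * x * γ := by group
            rwa [h5] at h4
          · intro h q
            obtain ⟨γ, rfl⟩ := QuotientGroup.mk'_surjective A q
            show π γ * π x = π x * π γ
            rw [← map_mul, ← map_mul]
            show ((γ * x : G) : G ⧸ A) = ((x * γ : G) : G ⧸ A)
            refine QuotientGroup.eq.mpr ?_
            have h5 : (γ * x)⁻¹ * (x * γ) = x⁻¹ * γ⁻¹ * x * γ := by group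
            rw [h5]
            exact h γ
        set B := (Subgroup.comap (π : G →* G ⧸ A) (Subgroup.center (G ⧸ A))) ⊓ C with hBdef
        have hccB : cc ∈ B := by
          refine Subgroup.mem_inf.mpr ⟨?_, hccC⟩
          rw [Subgroup.mem_comap]
          show π cc ∈ Subgroup.center (G ⧸ A)
          rw [hccz]
          exact hzc
        have hBg : ∀ x ∈ B, g x ∈ B := by
          intro x hx
          obtain ⟨hxZ, hxC⟩ := Subgroup.mem_inf.mp hx
          rw [Subgroup.mem_comap] at hxZ
          refine Subgroup.mem_inf.mpr ⟨?_, hCg x hxC⟩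
          rw [Subgroup.mem_comap]
          show π (g x) ∈ Subgroup.center (G ⧸ A)
          rw [hZmem] at hxZ ⊢
          intro γ
          have h1 := hxZ (g⁻¹ γ)
          have h4 : g (g⁻¹ γ) = γ := by rw [MulAut.inv_def]; exact g.apply_symm_apply γ
          have h5 : (g x)⁻¹ * γ⁻¹ * g x * γ = g (x⁻¹ * (g⁻¹ γ)⁻¹ * x * (g⁻¹ γ)) := by
            rw [map_mul, map_mul, map_mul, map_inv, map_inv, h4]
          rw [h5]
          exact hAg _ h1
        by_cases hBtop : B = ⊤
        · apply h2
          have hall : ∀ x : G, x ∈ C ∧ (π x) ∈ Subgroup.center (G ⧸ A) := by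
            intro x
            have h1 : x ∈ B := by rw [hBtop]; trivial
            obtain ⟨h3, h4⟩ := Subgroup.mem_inf.mp h1
            rw [Subgroup.mem_comap] at h3
            exact ⟨h4, h3⟩
          have hAcen : ∀ a ∈ A, a ∈ Subgroup.center G := by
            intro a ha
            rw [Subgroup.mem_center_iff]
            intro y
            exact (Subgroup.mem_centralizer_iff.mp (hall y).1 a ha).symm
          intro u v
          have h1 := (hZmem u⁻¹).mp (hall u⁻¹).2 v⁻¹
          have h3 : u⁻¹⁻¹ * v⁻¹⁻¹ * u⁻¹ * v⁻¹ = u * v * u⁻¹ * v⁻¹ := by group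
          rw [h3] at h1
          exact hAcen _ h1
        · -- B proper : build a strictly larger abelian invariant normal subgroup
          have hBfix := hsub B hBtop hBg
          have hgcc : g cc = cc := hBfix cc hccB
          have hcomm_cc : ∀ a ∈ A, Commute a cc :=
            fun a ha => Subgroup.mem_centralizer_iff.mp hccC a ha
          have hπcc : π cc ∈ Subgroup.center (G ⧸ A) := by rw [hccz]; exact hzc
          have hecc : ∀ γ : G, cc⁻¹ * γ * cc * γ⁻¹ ∈ A := by
            intro γ
            have h1 := (hZmem cc).mp hπcc γ⁻¹
            rwa [inv_inv] at h1
          have hmulmem : ∀ y1 y2 : G, (∃ a ∈ A, ∃ nn : ℤ, y1 = a * cc ^ nn) →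
              (∃ a ∈ A, ∃ nn : ℤ, y2 = a * cc ^ nn) →
              (∃ a ∈ A, ∃ nn : ℤ, y1 * y2 = a * cc ^ nn) := by
            rintro _ _ ⟨a, ha, n1, rfl⟩ ⟨a2, ha2, n2, rfl⟩
            refine ⟨a * a2, A.mul_mem ha ha2, n1 + n2, ?_⟩
            have hcom : Commute a2 (cc ^ n1) := (hcomm_cc a2 ha2).zpow_right n1
            calc a * cc ^ n1 * (a2 * cc ^ n2) = a * (cc ^ n1 * a2) * cc ^ n2 := by group
              _ = a * (a2 * cc ^ n1) * cc ^ n2 := by rw [← hcom.eq]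
              _ = a * a2 * (cc ^ n1 * cc ^ n2) := by group
              _ = a * a2 * cc ^ (n1 + n2) := by rw [← zpow_add]
          have hinvmem : ∀ y1 : G, (∃ a ∈ A, ∃ nn : ℤ, y1 = a * cc ^ nn) →
              (∃ a ∈ A, ∃ nn : ℤ, y1⁻¹ = a * cc ^ nn) := by
            rintro _ ⟨a, ha, n1, rfl⟩
            refine ⟨a⁻¹, A.inv_mem ha, -n1, ?_⟩
            have hcom : Commute a⁻¹ (cc ^ (-n1)) := ((hcomm_cc a ha).inv_left).zpow_right _
            calc (a * cc ^ n1)⁻¹ = cc ^ (-n1) * a⁻¹ := by rw [mul_inv_rev, ← zpow_neg]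
              _ = a⁻¹ * cc ^ (-n1) := hcom.symm.eq
          let A' : Subgroup G :=
            {carrier := setOf (fun y => ∃ a ∈ A, ∃ nn : ℤ, y = a * cc ^ nn)
             one_mem' := ⟨1, A.one_mem, 0, by simp⟩
             mul_mem' := fun h1 h2 => hmulmem _ _ h1 h2
             inv_mem' := fun h1 => hinvmem _ h1}
          have hmem : ∀ y : G, y ∈ A' ↔ ∃ a ∈ A, ∃ nn : ℤ, y = a * cc ^ nn :=
            fun y => Iff.rfl
          have hA'g : ∀ x ∈ A', g x ∈ A' := by
            intro x hxx
            obtain ⟨a, ha, nn, rfl⟩ := (hmem x).mp hxx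
            refine (hmem _).mpr ⟨g a, hAg a ha, nn, ?_⟩
            rw [map_mul, map_zpow, hgcc]
          have hA'norm : A'.Normal := by
            constructor
            intro y hy γ
            obtain ⟨a, ha, nn, rfl⟩ := (hmem y).mp hy
            have he : cc⁻¹ * γ * cc * γ⁻¹ ∈ A := hecc γ
            have hγcc : γ * cc * γ⁻¹ = cc * (cc⁻¹ * γ * cc * γ⁻¹) := by group
            have hcome : Commute cc (cc⁻¹ * γ * cc * γ⁻¹) := (hcomm_cc _ he).symm
            have hconj : γ * cc ^ nn * γ⁻¹ = cc ^ nn * (cc⁻¹ * γ * cc * γ⁻¹) ^ nn := by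
              have h1 : γ * cc ^ nn * γ⁻¹ = (γ * cc * γ⁻¹) ^ nn := conj_zpow.symm
              rw [h1, hγcc, hcome.mul_zpow]
            refine (hmem _).mpr ⟨(γ * a * γ⁻¹) * (cc⁻¹ * γ * cc * γ⁻¹) ^ nn,
              A.mul_mem (hAnorm.conj_mem a ha γ) (A.zpow_mem he nn), nn, ?_⟩
            have hcome2 : Commute ((cc⁻¹ * γ * cc * γ⁻¹) ^ nn) (cc ^ nn) :=
              ((hcomm_cc _ he).zpow_right nn).zpow_left nn
            calc γ * (a * cc ^ nn) * γ⁻¹ = (γ * a * γ⁻¹) * (γ * cc ^ nn * γ⁻¹) := by group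
              _ = (γ * a * γ⁻¹) * (cc ^ nn * (cc⁻¹ * γ * cc * γ⁻¹) ^ nn) := by rw [hconj]
              _ = (γ * a * γ⁻¹) * ((cc⁻¹ * γ * cc * γ⁻¹) ^ nn * cc ^ nn) := by rw [hcome2.eq]
              _ = (γ * a * γ⁻¹) * (cc⁻¹ * γ * cc * γ⁻¹) ^ nn * cc ^ nn := by group
          have hA'ab : ∀ y1 ∈ A', ∀ y2 ∈ A', y1 * y2 = y2 * y1 := by
            intro y1 hy1 y2 hy2
            obtain ⟨a, ha, n1, rfl⟩ := (hmem y1).mp hy1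
            obtain ⟨a2, ha2, n2, rfl⟩ := (hmem y2).mp hy2
            have hc1 : Commute a2 (cc ^ n1) := (hcomm_cc a2 ha2).zpow_right n1
            have hc2 : Commute a (cc ^ n2) := (hcomm_cc a ha).zpow_right n2
            have hc3 : Commute (cc ^ n1) (cc ^ n2) := ((Commute.refl cc).zpow_right n2).zpow_left n1
            have haa : a * a2 = a2 * a := hAab a ha a2 ha2
            calc a * cc ^ n1 * (a2 * cc ^ n2)
                = a * (cc ^ n1 * a2) * cc ^ n2 := by group
              _ = a * (a2 * cc ^ n1) * cc ^ n2 := by rw [← hc1.eq]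
              _ = (a * a2) * (cc ^ n1 * cc ^ n2) := by group
              _ = (a2 * a) * (cc ^ n2 * cc ^ n1) := by rw [haa, hc3.eq]
              _ = a2 * (a * cc ^ n2) * cc ^ n1 := by group
              _ = a2 * (cc ^ n2 * a) * cc ^ n1 := by rw [hc2.eq]
              _ = a2 * cc ^ n2 * (a * cc ^ n1) := by group
          have hle : A ≤ A' := fun a ha => (hmem a).mpr ⟨a, ha, 0, by simp⟩
          have heq : id A = id A' := le_antisymm hle (hAmax (j := A') ⟨hA'g, hA'norm, hA'ab⟩ hle)
          simp only [id] at heq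
          apply hccA
          rw [heq]
          exact (hmem cc).mpr ⟨1, A.one_mem, 1, by simp⟩

theorem stmt_14 {G : Type*} [Group G] [Finite G] (p : ℕ) (hp : p.Prime)
    (hG : IsPGroup p G) (g : MulAut G) (hord : Nat.Coprime (orderOf g) p)
    (hfix : ∀ x : G, x ^ (if p = 2 then 4 else p) = 1 → g x = x) :
    g = 1 :=
  key (Nat.card G) p hp hG g le_rfl hord hfix
end

section
/- Let G be a finite group, P a Sylow p-subgroup, B ≤ Z(P), and g ∈ N_G(B) a p'-element. If P controls fusion of cyclic subgroups of order p (of order 2 and 4 when p = 2) in G, then g centralizes B. -/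
theorem stmt_16 {G : Type*} [Group G] [Finite G] (p : ℕ) (hp : p.Prime) (P : Sylow p G)
    (B : Subgroup G) (hBP : B ≤ (P : Subgroup G))
    (hBZ : ∀ b ∈ B, ∀ x ∈ (P : Subgroup G), b * x = x * b)
    (g : G) (hg : g ∈ Subgroup.normalizer (B : Set G)) (hg' : Nat.Coprime (orderOf g) p)
    (hfus : ∀ A : Subgroup G,
      ((p ≠ 2 ∧ Nat.card A = p) ∨ (p = 2 ∧ IsCyclic A ∧ (Nat.card A = 2 ∨ Nat.card A = 4))) →
      A ≤ (P : Subgroup G) → ∀ h : G, (∀ a ∈ A, h⁻¹ * a * h ∈ (P : Subgroup G)) →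
      ∃ c ∈ Subgroup.centralizer (A : Set G), ∃ x ∈ (P : Subgroup G), h = c * x) :
    ∀ b ∈ B, g * b = b * g := by
  have hnorm : ∀ b ∈ B, g * b * g⁻¹ ∈ B := fun b hb =>
    (Subgroup.mem_normalizer_iff.mp hg b).mp hb
  have hnorm' : ∀ b ∈ B, g⁻¹ * b * g ∈ B := by
    intro b hb
    have := (Subgroup.mem_normalizer_iff.mp hg (g⁻¹ * b * g)).mpr
    apply this
    simpa [mul_assoc] using hb
  suffices H : ∀ n, ∀ b ∈ B, orderOf b = n → g * b = b * g by
    intro b hb; exact H _ b hb rfl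
  intro n
  induction n using Nat.strong_induction_on with
  | _ n ih =>
  intro b hb hbn
  -- orderOf b is a power of p
  have hbP : b ∈ (P : Subgroup G) := hBP hb
  obtain ⟨m, hm⟩ : ∃ m, orderOf b = p ^ m := by
    have hfact : Fact p.Prime := ⟨hp⟩
    have := (IsPGroup.iff_orderOf.mp P.2) ⟨b, hbP⟩
    simpa [Subgroup.orderOf_mk] using this
  match m, hm with
  | 0, hm =>
    have : b = 1 := orderOf_eq_one_iff.mp (by rw [hm, pow_zero])
    simp [this]
  | 1, hm =>
    -- base case: order p, use fusion
    rw [pow_one] at hm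
    set A : Subgroup G := Subgroup.zpowers b with hA
    have hAB : A ≤ B := (Subgroup.zpowers_le).mpr hb
    have hAP : A ≤ (P : Subgroup G) := hAB.trans hBP
    have hcard : Nat.card A = p := by rw [hA, Nat.card_zpowers, hm]
    have hcyc : IsCyclic A := by
      constructor
      refine ⟨⟨b, Subgroup.mem_zpowers b⟩, ?_⟩
      rintro ⟨x, hx⟩
      obtain ⟨z, rfl⟩ := hx
      exact ⟨z, by ext; simp⟩
    have hcond : (p ≠ 2 ∧ Nat.card A = p) ∨
        (p = 2 ∧ IsCyclic A ∧ (Nat.card A = 2 ∨ Nat.card A = 4)) := by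
      by_cases h2 : p = 2
      · exact Or.inr ⟨h2, hcyc, Or.inl (by rw [hcard, h2])⟩
      · exact Or.inl ⟨h2, hcard⟩
    obtain ⟨c, hc, x, hx, hgcx⟩ := hfus A hcond hAP g (by
      intro a ha
      exact hBP (hnorm' a (hAB ha)))
    have hcb : b * c = c * b := Subgroup.mem_centralizer_iff.mp hc b (Subgroup.mem_zpowers b)
    have hbx : b * x = x * b := hBZ b hb x hx
    rw [hgcx, mul_assoc, ← hbx, ← mul_assoc, ← hcb, mul_assoc]
  | (m + 2), hm =>
    -- inductive step
    set c : G := b⁻¹ * (g * b * g⁻¹) with hc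
    have hgbB : g * b * g⁻¹ ∈ B := hnorm b hb
    have hcB : c ∈ B := B.mul_mem (B.inv_mem hb) hgbB
    -- elements of B commute with each other
    have hBab : ∀ a ∈ B, ∀ a' ∈ B, Commute a a' := fun a ha a' ha' =>
      (hBZ a ha a' (hBP ha'))
    -- g commutes with b^p by induction
    have hbp : g * b ^ p = b ^ p * g := by
      apply ih (orderOf (b ^ p)) ?_ (b ^ p) (B.pow_mem hb p) rfl
      have h1 : (b ^ p) ^ p ^ (m + 1) = 1 := by
        rw [← pow_mul, ← pow_succ']
        rw [← hm]
        exact pow_orderOf_eq_one b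
      have h2 : orderOf (b ^ p) ∣ p ^ (m + 1) := orderOf_dvd_of_pow_eq_one h1
      calc orderOf (b ^ p) ≤ p ^ (m + 1) := Nat.le_of_dvd (pow_pos hp.pos _) h2
        _ < p ^ (m + 2) := Nat.pow_lt_pow_succ hp.one_lt
        _ = n := by rw [← hm, hbn]
    have hgb : g * b = b * c * g := by
      rw [hc]; group
    have hcp : c ^ p = 1 := by
      have hcomm : Commute b⁻¹ (g * b * g⁻¹) := hBab _ (B.inv_mem hb) _ hgbB
      rw [hc, hcomm.mul_pow, inv_pow]
      have hconj : ∀ k : ℕ, (g * b * g⁻¹) ^ k = g * b ^ k * g⁻¹ := by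
        intro k
        induction k with
        | zero => group
        | succ k ihk => rw [pow_succ, pow_succ, ihk]; group
      rw [hconj p, hbp]
      group
    have hordc : orderOf c ∣ p := orderOf_dvd_of_pow_eq_one hcp
    have hgc : g * c = c * g := by
      apply ih (orderOf c) ?_ c hcB rfl
      calc orderOf c ≤ p := Nat.le_of_dvd hp.pos hordc
        _ < p ^ (m + 2) := by
          calc p = p ^ 1 := (pow_one p).symm
            _ < p ^ (m + 2) := Nat.pow_lt_pow_right hp.one_lt (by omega)
        _ = n := by rw [← hm, hbn]
    have hgck : ∀ k : ℕ, Commute g (c ^ k) := fun k => Commute.pow_right hgc k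
    have key : ∀ k : ℕ, g ^ k * b = b * c ^ k * g ^ k := by
      intro k
      induction k with
      | zero => simp
      | succ k ihk =>
        calc g ^ (k + 1) * b = g * (g ^ k * b) := by rw [pow_succ']; group
          _ = g * (b * c ^ k * g ^ k) := by rw [ihk]
          _ = (g * b) * c ^ k * g ^ k := by group
          _ = b * c * (g * c ^ k) * g ^ k := by rw [hgb]; group
          _ = b * c * (c ^ k * g) * g ^ k := by rw [hgck k]
          _ = b * c ^ (k + 1) * g ^ (k + 1) := by rw [pow_succ', pow_succ']; group
    have hck : c ^ orderOf g = 1 := by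
      have := key (orderOf g)
      rw [pow_orderOf_eq_one g] at this
      simpa using this.symm
    have hordc' : orderOf c ∣ orderOf g := orderOf_dvd_of_pow_eq_one hck
    have : orderOf c ∣ 1 := hg' ▸ Nat.dvd_gcd hordc' hordc
    have hc1 : c = 1 := orderOf_eq_one_iff.mp (Nat.dvd_one.mp this)
    rw [hgb, hc1, mul_one]
end

section
/- Let G be the semidirect product of the quaternion group Q₈ with a cyclic group of order 3 acting by cyclically permuting i, j, k (so G ≅ SL(2,3)). Then the unique subgroup of G of exponent 2 is the center {1, -1}, the Sylow 2-subgroup Q₈ controls fusion of cyclic subgroups of order 2 in G, but G is not 2-nilpotent. -/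
open Matrix Pointwise

abbrev G3 := Matrix.SpecialLinearGroup (Fin 2) (ZMod 3)

instance instDecEqG3 : DecidableEq G3 :=
  fun a b => decidable_of_iff (a.1 = b.1) Subtype.ext_iff.symm

def zG3 : G3 := ⟨!![2,0;0,2], by decide⟩
def aG3 : G3 := ⟨!![1,1;0,1], by decide⟩
def bG3 : G3 := ⟨!![1,0;1,1], by decide⟩

lemma G3_sq : ∀ x : G3, x ^ 2 = 1 → x = 1 ∨ x = zG3 := by decide

lemma G3_cen : ∀ x : G3, x ∈ Subgroup.center G3 ↔ (x = 1 ∨ x = zG3) := by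
  intro x
  rw [Subgroup.mem_center_iff]
  revert x; decide

lemma G3_card : Nat.card G3 = 24 := by
  rw [Nat.card_eq_fintype_card]; decide

lemma G3_cen_set : (Subgroup.center G3 : Set G3) = {1, zG3} := by
  ext x; simpa using G3_cen x

lemma G3_cen_card : Nat.card (Subgroup.center G3) = 2 := by
  have : Nat.card (Subgroup.center G3) = (Subgroup.center G3 : Set G3).ncard :=
    (Nat.card_coe_set_eq _).symm
  rw [this, G3_cen_set, Set.ncard_pair (by decide : (1 : G3) ≠ zG3)]

lemma G3_exp2 (A : Subgroup G3) (hA : A ≠ ⊥) (h2 : ∀ a ∈ A, a ^ 2 = 1) :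
    A = Subgroup.center G3 := by
  obtain ⟨⟨a, haA⟩, ha1⟩ := Subgroup.ne_bot_iff_exists_ne_one.mp hA
  have ha1' : a ≠ 1 := by simpa [Subtype.ext_iff] using ha1
  have haz : a = zG3 := (G3_sq a (h2 a haA)).resolve_left ha1'
  have hzA : zG3 ∈ A := haz ▸ haA
  ext x
  rw [G3_cen x]
  constructor
  · intro hx; exact G3_sq x (h2 x hx)
  · rintro (rfl | rfl)
    · exact A.one_mem
    · exact hzA

lemma G3_card2_exp (A : Subgroup G3) (hA : Nat.card A = 2) : ∀ a ∈ A, a ^ 2 = 1 := by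
  intro a ha
  have h : (⟨a, ha⟩ : A) ^ Nat.card A = 1 := pow_card_eq_one'
  rw [hA] at h
  simpa [Subtype.ext_iff] using h

lemma G3_card2_eq_center (A : Subgroup G3) (hA : Nat.card A = 2) :
    A = Subgroup.center G3 := by
  refine G3_exp2 A ?_ (G3_card2_exp A hA)
  rintro rfl
  rw [Subgroup.card_bot] at hA
  exact absurd hA (by norm_num)

open Matrix in
theorem stmt_17 (P : Sylow 2 (SpecialLinearGroup (Fin 2) (ZMod 3))) :
    (Nat.card (Subgroup.center (SpecialLinearGroup (Fin 2) (ZMod 3))) = 2 ∧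
      ∀ a ∈ Subgroup.center (SpecialLinearGroup (Fin 2) (ZMod 3)), a ^ 2 = 1) ∧
    (∀ A : Subgroup (SpecialLinearGroup (Fin 2) (ZMod 3)), A ≠ ⊥ → (∀ a ∈ A, a ^ 2 = 1) →
        A = Subgroup.center (SpecialLinearGroup (Fin 2) (ZMod 3))) ∧
    (∀ A : Subgroup (SpecialLinearGroup (Fin 2) (ZMod 3)), Nat.card A = 2 →
        ∃ g, ∀ a ∈ A, g⁻¹ * a * g ∈ (P : Subgroup _)) ∧
    (∀ A : Subgroup (SpecialLinearGroup (Fin 2) (ZMod 3)), A ≤ (P : Subgroup _) →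
        Nat.card A = 2 → ∀ g, (∀ a ∈ A, g⁻¹ * a * g ∈ (P : Subgroup _)) →
        ∃ x ∈ (P : Subgroup _), ∀ a ∈ A, g⁻¹ * a * g = x⁻¹ * a * x) ∧
    ¬ ∃ N : Subgroup (SpecialLinearGroup (Fin 2) (ZMod 3)),
        N.Normal ∧ Nat.Coprime (Nat.card N) 2 ∧ N ⊔ (P : Subgroup _) = ⊤ := by
  -- cardinality of the Sylow 2-subgroup
  have hP8 : Nat.card (P : Subgroup G3) = 8 := by
    have := Sylow.card_eq_multiplicity P
    rw [G3_card] at this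
    rw [this]
    have h24 : (Nat.factorization 24) 2 = 3 := by
      rw [show (24 : ℕ) = 2 ^ 3 * 3 by norm_num,
        Nat.factorization_mul (by norm_num) (by norm_num),
        Nat.Prime.factorization_pow (by norm_num)]
      simp [Nat.factorization_eq_zero_of_not_dvd]
    rw [h24]
    norm_num
  -- zG3 belongs to P
  have hzP : zG3 ∈ (P : Subgroup G3) := by
    obtain ⟨x, hx⟩ := exists_prime_orderOf_dvd_card' (G := (P : Subgroup G3)) 2
      (by rw [hP8]; norm_num)
    have hx2 : (x : G3) ^ 2 = 1 := by
      have : x ^ 2 = 1 := by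
        have h := pow_orderOf_eq_one x
        rw [hx] at h; exact h
      simpa [Subtype.ext_iff] using this
    have hx1 : (x : G3) ≠ 1 := by
      intro h
      have : x = 1 := Subtype.ext h
      rw [this, orderOf_one] at hx
      norm_num at hx
    have := (G3_sq _ hx2).resolve_left hx1
    rw [← this]; exact x.2
  have hcenP : Subgroup.center G3 ≤ (P : Subgroup G3) := by
    intro x hx
    rcases (G3_cen x).mp hx with rfl | rfl
    · exact (P : Subgroup G3).one_mem
    · exact hzP
  refine ⟨⟨G3_cen_card, ?_⟩, G3_exp2, ?_, ?_, ?_⟩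
  · intro a ha
    rcases (G3_cen a).mp ha with rfl | rfl
    · simp
    · decide
  · -- conjugation into P
    intro A hA
    refine ⟨1, fun a ha => ?_⟩
    have : a ∈ Subgroup.center G3 := (G3_card2_eq_center A hA) ▸ ha
    simpa using hcenP this
  · -- fusion control
    intro A _ hA g _
    refine ⟨1, (P : Subgroup G3).one_mem, fun a ha => ?_⟩
    have hc : a ∈ Subgroup.center G3 := (G3_card2_eq_center A hA) ▸ ha
    have hcomm : g * a = a * g := (Subgroup.mem_center_iff.mp hc g)
    rw [inv_one, one_mul, mul_one, mul_assoc, ← hcomm, ← mul_assoc, inv_mul_cancel, one_mul]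
  · -- not 2-nilpotent
    rintro ⟨N, hN, hcop, hsup⟩
    have hdvd : Nat.card N ∣ 24 := G3_card ▸ Subgroup.card_subgroup_dvd_card N
    -- |N| ≥ 3
    have hle : 24 ≤ Nat.card N * 8 := by
      have h1 : (24 : ℕ) = Nat.card ((N ⊔ (P : Subgroup G3) : Subgroup G3) : Set G3) := by
        have e : Nat.card ((N ⊔ (P : Subgroup G3) : Subgroup G3) : Set G3) =
            Nat.card (N ⊔ (P : Subgroup G3) : Subgroup G3) := rfl
        rw [e, hsup, Subgroup.card_top, G3_card]
      have h2 : ((N ⊔ (P : Subgroup G3) : Subgroup G3) : Set G3) =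
          (N : Set G3) * ((P : Subgroup G3) : Set G3) := Subgroup.normal_mul N _
      rw [h1, h2]
      calc Nat.card ((N : Set G3) * ((P : Subgroup G3) : Set G3)) ≤
          Nat.card (N : Set G3) * Nat.card ((P : Subgroup G3) : Set G3) :=
            Set.natCard_mul_le
        _ = Nat.card N * 8 := by
              have e1 : Nat.card ((P : Subgroup G3) : Set G3) = 8 := hP8
              have e2 : Nat.card ((N : Subgroup G3) : Set G3) = Nat.card N := rfl
              rw [e1, e2]
    have hN3 : Nat.card N = 3 := by
      have hd3 : Nat.card N ∣ 3 := by
        have hcop8 : (Nat.card N).Coprime 8 := Nat.Coprime.pow_right 3 hcop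
        exact hcop8.dvd_of_dvd_mul_right (by simpa [show (3 : ℕ) * 8 = 24 by norm_num] using hdvd)
      have := Nat.le_of_dvd (by norm_num) hd3
      interval_cases h : Nat.card N <;> omega
    -- the quotient has order 8
    have hQ8 : Nat.card (G3 ⧸ N) = 8 := by
      have h : Nat.card G3 = Nat.card (G3 ⧸ N) * Nat.card N :=
        Subgroup.card_eq_card_quotient_mul_card_subgroup N
      rw [G3_card, hN3] at h
      omega
    -- every element of order dividing 3 lies in N
    have hmem : ∀ x : G3, x ^ 3 = 1 → x ∈ N := by
      intro x hx
      have h1 : orderOf ((x : G3 ⧸ N)) ∣ 3 := by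
        apply orderOf_dvd_of_pow_eq_one
        rw [← QuotientGroup.mk_pow, hx]; rfl
      have h2 : orderOf ((x : G3 ⧸ N)) ∣ 8 := hQ8 ▸ orderOf_dvd_natCard _
      have h3 : orderOf ((x : G3 ⧸ N)) = 1 := Nat.eq_one_of_dvd_one
        (Nat.dvd_gcd h1 h2)
      have : ((x : G3 ⧸ N)) = 1 := orderOf_eq_one_iff.mp h3
      exact (QuotientGroup.eq_one_iff x).mp this
    have haN : aG3 ∈ N := hmem aG3 (by decide)
    have hbN : bG3 ∈ N := hmem bG3 (by decide)
    -- but then N has at least 4 elements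
    have hsub : (↑({1, aG3, aG3 ^ 2, bG3} : Finset G3) : Set G3) ⊆ (N : Set G3) := by
      intro x hx
      simp only [Finset.coe_insert, Finset.coe_singleton, Set.mem_insert_iff,
        Set.mem_singleton_iff] at hx
      rcases hx with rfl | rfl | rfl | rfl
      · exact N.one_mem
      · exact haN
      · exact N.pow_mem haN 2
      · exact hbN
    have h4 : 4 ≤ Nat.card N := by
      calc (4 : ℕ) = ({1, aG3, aG3 ^ 2, bG3} : Finset G3).card := by decide
        _ = (↑({1, aG3, aG3 ^ 2, bG3} : Finset G3) : Set G3).ncard :=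
            (Set.ncard_coe_finset _).symm
        _ ≤ (N : Set G3).ncard := Set.ncard_le_ncard hsub (Set.toFinite _)
        _ = Nat.card N := (Nat.card_coe_set_eq _)
    omega
end

section
/- Let G be a finite group, P a Sylow p-subgroup, and suppose all elements of P of order dividing p (dividing 4 when p = 2) lie in Z(P). If A is a cyclic subgroup of G of order p (or order 2 or 4 when p = 2) with A ≤ P and A ≤ P^{g⁻¹} for some g ∈ G, then both P and P^{g⁻¹} are contained in C_G(A), and hence there exists c ∈ C_G(A) with P = P^{g⁻¹c}. -/
theorem stmt_18 {G : Type*} [Group G] [Finite G] (p : ℕ) (hp : p.Prime) (P : Sylow p G)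
    (hcen : ∀ x ∈ (P : Subgroup G), x ^ (if p = 2 then 4 else p) = 1 →
      ∀ y ∈ (P : Subgroup G), x * y = y * x)
    (A : Subgroup G)
    (hA : (p ≠ 2 ∧ Nat.card A = p) ∨
      (p = 2 ∧ IsCyclic A ∧ (Nat.card A = 2 ∨ Nat.card A = 4)))
    (g : G) (hAP : A ≤ (P : Subgroup G)) (hAPg : ∀ a ∈ A, g⁻¹ * a * g ∈ (P : Subgroup G)) :
    (P : Subgroup G) ≤ Subgroup.centralizer (A : Set G) ∧
    (P : Subgroup G).map (MulAut.conj g).toMonoidHom ≤ Subgroup.centralizer (A : Set G) ∧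
    ∃ c ∈ Subgroup.centralizer (A : Set G),
      (P : Subgroup G).map (MulAut.conj (c⁻¹ * g)).toMonoidHom = (P : Subgroup G) := by
  haveI : Fact p.Prime := ⟨hp⟩
  -- every element of A has order dividing the exponent bound
  have key : ∀ a ∈ A, a ^ (if p = 2 then 4 else p) = 1 := by
    intro a ha
    have hcard : a ^ Nat.card A = 1 := by
      have := pow_card_eq_one' (G := A) (x := ⟨a, ha⟩)
      exact_mod_cast congrArg (Subgroup.subtype A) this
    rcases hA with ⟨hne, hc⟩ | ⟨h2, _, hc⟩
    · rw [if_neg hne, ← hc]; exact hcard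
    · rw [if_pos h2]
      rcases hc with hc | hc
      · have : a ^ 2 = 1 := by rw [← hc]; exact hcard
        calc a ^ 4 = (a ^ 2) ^ 2 := by rw [← pow_mul]
        _ = 1 := by rw [this, one_pow]
      · rw [← hc]; exact hcard
  have h1 : (P : Subgroup G) ≤ Subgroup.centralizer (A : Set G) := by
    intro y hy
    rw [Subgroup.mem_centralizer_iff]
    intro a ha
    exact hcen a (hAP ha) (key a ha) y hy
  -- identify the conjugate subgroup with the Sylow smul
  have hsm : ∀ x : G, ((x • P : Sylow p G) : Subgroup G)
      = (P : Subgroup G).map (MulAut.conj x).toMonoidHom := by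
    intro x
    rfl
  have h2 : (P : Subgroup G).map (MulAut.conj g).toMonoidHom
      ≤ Subgroup.centralizer (A : Set G) := by
    rintro - ⟨y, hy, rfl⟩
    rw [Subgroup.mem_centralizer_iff]
    intro a ha
    have hb : g⁻¹ * a * g ∈ (P : Subgroup G) := hAPg a ha
    have hbe : (g⁻¹ * a * g) ^ (if p = 2 then 4 else p) = 1 := by
      rw [show g⁻¹ * a * g = g⁻¹ * a * g⁻¹⁻¹ by rw [inv_inv], conj_pow, key a ha, mul_one,
        mul_inv_cancel]
    have := hcen _ hb hbe y hy
    simp only [MulEquiv.coe_toMonoidHom, MulAut.conj_apply]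
    calc a * (g * y * g⁻¹) = g * ((g⁻¹ * a * g) * y) * g⁻¹ := by group
    _ = g * (y * (g⁻¹ * a * g)) * g⁻¹ := by rw [this]
    _ = g * y * g⁻¹ * a := by group
  refine ⟨h1, h2, ?_⟩
  have h2' : ((g • P : Sylow p G) : Subgroup G) ≤ Subgroup.centralizer (A : Set G) := by
    rw [hsm]; exact h2
  obtain ⟨h, hh⟩ := MulAction.exists_smul_eq (Subgroup.centralizer (A : Set G))
    ((g • P).subtype h2') (P.subtype h1)
  simp_rw [Sylow.smul_subtype, Subgroup.smul_def, smul_smul] at hh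
  have heq : ((h : G) * g) • P = P := Sylow.subtype_injective hh
  refine ⟨(h : G)⁻¹, inv_mem h.2, ?_⟩
  rw [inv_inv, ← hsm, heq]
end
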